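/- Let r ≥ 2, t ≥ 2, and suppose n = a(r+t-1) + b with 0 ≤ b ≤ r+t-2. If there exists an (r-1)-(r+t-1, r, 1) covering design of size c, then ex_r(n, Tr(K_{1,t})) ≥ a·(C(r+t-1, r) − c) + C(b, r). -/

import Mathlib

/-- An `r`-uniform hypergraph. -/
def IsUniform (r : ℕ) {V : Type*} (H : Finset (Finset V)) : Prop :=
  ∀ e ∈ H, e.card = r

/-- `H` contains the star `K_{1,t}` as a trace. -/
def HasStarTrace (t : ℕ) {V : Type*} [DecidableEq V] (H : Finset (Finset V)) : Prop :=
  ∃ (w0 : V) (w : Fin t → V) (f : Fin t → Finset V),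
    Function.Injective w ∧ (∀ i, w i ≠ w0) ∧ Function.Injective f ∧
    (∀ i, f i ∈ H) ∧
    ∀ i, f i ∩ insert w0 (Finset.image w Finset.univ) = {w0, w i}

/-- Transfer a star trace back along an equivalence. -/
lemma star_trace_of_image {V W : Type*} [DecidableEq V] [DecidableEq W] (e : V ≃ W)
    (t : ℕ) (H : Finset (Finset V))
    (h : HasStarTrace t (H.image (Finset.image e))) : HasStarTrace t H := by
  obtain ⟨w0, w, f, hwinj, hwne, hfinj, hfH, hfS⟩ := h
  refine ⟨e.symm w0, fun i => e.symm (w i), fun i => (f i).image e.symm, ?_, ?_, ?_, ?_, ?_⟩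
  · exact fun i j hij => hwinj (e.symm.injective hij)
  · exact fun i hi => hwne i (e.symm.injective hi)
  · exact fun i j hij => hfinj (Finset.image_injective e.symm.injective hij)
  · intro i
    obtain ⟨g, hg, hge⟩ := Finset.mem_image.1 (hfH i)
    have : (f i).image ⇑e.symm = g := by
      rw [← hge, Finset.image_image]
      simp
    show (f i).image ⇑e.symm ∈ H
    rw [this]; exact hg
  · intro i
    show (f i).image ⇑e.symm ∩ insert (e.symm w0) (Finset.image (fun i => e.symm (w i)) Finset.univ)
        = {e.symm w0, e.symm (w i)}
    have h1 : ((f i) ∩ insert w0 (Finset.image w Finset.univ)).image ⇑e.symm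
        = ({w0, w i} : Finset W).image ⇑e.symm := by rw [hfS i]
    rw [Finset.image_inter _ _ e.symm.injective] at h1
    have h2 : (insert w0 (Finset.image w Finset.univ)).image ⇑e.symm
        = insert (e.symm w0) (Finset.image (fun i => e.symm (w i)) Finset.univ) := by
      rw [Finset.image_insert, Finset.image_image]
      rfl
    have h3 : ({w0, w i} : Finset W).image ⇑e.symm = {e.symm w0, e.symm (w i)} := by
      simp
    rw [h2, h3] at h1
    exact h1

lemma main_construction (r t a b c : ℕ) (hr : 2 ≤ r) (ht : 2 ≤ t) (hb : b ≤ r + t - 2)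
    (C : Finset (Finset (Fin (r + t - 1)))) (hC : C.card = c) (hCu : ∀ e ∈ C, e.card = r)
    (hcov : ∀ s : Finset (Fin (r + t - 1)), s.card = r - 1 → ∃ e ∈ C, s ⊆ e) :
    ∃ H : Finset (Finset ((Fin a × Fin (r + t - 1)) ⊕ Fin b)),
      IsUniform r H ∧ ¬ HasStarTrace t H ∧
      a * ((r + t - 1).choose r - c) + b.choose r ≤ H.card := by
  classical
  have hblinj : ∀ j : Fin a, Function.Injective
      (fun x : Fin (r + t - 1) => (Sum.inl (j, x) : (Fin a × Fin (r + t - 1)) ⊕ Fin b)) := by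
    intro j x y hxy
    simpa using hxy
  set D : Finset (Finset (Fin (r + t - 1))) := Finset.univ.powersetCard r \ C with hD
  set HL : Finset (Finset ((Fin a × Fin (r + t - 1)) ⊕ Fin b)) :=
    ((Finset.univ : Finset (Fin b)).powersetCard r).image (Finset.image Sum.inr) with hHL
  set HB : Finset (Finset ((Fin a × Fin (r + t - 1)) ⊕ Fin b)) :=
    Finset.univ.biUnion (fun j : Fin a =>
      D.image (fun d => d.image (fun x => Sum.inl (j, x)))) with hHB
  refine ⟨HB ∪ HL, ?_, ?_, ?_⟩
  · -- uniformity
    intro e he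
    rcases Finset.mem_union.1 he with he | he
    · obtain ⟨j, -, hj⟩ := Finset.mem_biUnion.1 he
      obtain ⟨d, hd, hde⟩ := Finset.mem_image.1 hj
      have hdcard : d.card = r := (Finset.mem_powersetCard.1 (Finset.mem_sdiff.1 hd).1).2
      rw [← hde, Finset.card_image_of_injective _ (hblinj j), hdcard]
    · obtain ⟨d, hd, hde⟩ := Finset.mem_image.1 he
      have hdcard : d.card = r := (Finset.mem_powersetCard.1 hd).2
      rw [← hde, Finset.card_image_of_injective _ Sum.inr_injective, hdcard]
  · -- no star trace
    rintro ⟨w0, w, f, hwinj, hwne, hfinj, hfH, hfS⟩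
    have hw0f : ∀ i, w0 ∈ f i := by
      intro i
      have : w0 ∈ f i ∩ insert w0 (Finset.image w Finset.univ) := by
        rw [hfS i]; simp
      exact (Finset.mem_inter.1 this).1
    have hwf : ∀ i, w i ∈ f i := by
      intro i
      have : w i ∈ f i ∩ insert w0 (Finset.image w Finset.univ) := by
        rw [hfS i]; simp
      exact (Finset.mem_inter.1 this).1
    have hnotin : ∀ i j : Fin t, j ≠ i → w j ∉ f i := by
      intro i j hji hmem
      have : w j ∈ f i ∩ insert w0 (Finset.image w Finset.univ) := by
        refine Finset.mem_inter.2 ⟨hmem, ?_⟩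
        simp [Finset.mem_insert]
      rw [hfS i] at this
      rcases Finset.mem_insert.1 this with h | h
      · exact hwne j h
      · exact hji (hwinj (Finset.mem_singleton.1 h))
    have hi0 : (0 : ℕ) < t := by omega
    rcases w0 with ⟨j0, x⟩ | v
    · -- center lies in a block
      have hstruct : ∀ i : Fin t, ∃ d, d ∈ D ∧
          f i = d.image (fun x => Sum.inl (j0, x)) ∧ x ∈ d := by
        intro i
        rcases Finset.mem_union.1 (hfH i) with he | he
        · obtain ⟨j, -, hj⟩ := Finset.mem_biUnion.1 he
          obtain ⟨d, hd, hde⟩ := Finset.mem_image.1 hj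
          have hx : (Sum.inl (j0, x) : (Fin a × Fin (r + t - 1)) ⊕ Fin b)
              ∈ d.image (fun x => Sum.inl (j, x)) := by rw [hde]; exact hw0f i
          obtain ⟨y0, hy0, hy0x⟩ := Finset.mem_image.1 hx
          have h12 : j = j0 ∧ y0 = x := by
            have h0 := Sum.inl.inj hy0x
            exact ⟨congrArg Prod.fst h0, congrArg Prod.snd h0⟩
          obtain ⟨h1, h2⟩ := h12
          subst h1; subst h2
          exact ⟨d, hd, hde.symm, hy0⟩
        · obtain ⟨d, hd, hde⟩ := Finset.mem_image.1 he
          have hx : (Sum.inl (j0, x) : (Fin a × Fin (r + t - 1)) ⊕ Fin b)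
              ∈ d.image Sum.inr := by rw [hde]; exact hw0f i
          obtain ⟨y0, -, hy0⟩ := Finset.mem_image.1 hx
          exact absurd hy0 (by simp)
      choose d hdD hfd hxd using hstruct
      have hleaf : ∀ i : Fin t, ∃ z : Fin (r + t - 1),
          w i = Sum.inl (j0, z) ∧ z ∈ d i := by
        intro i
        have h := hwf i
        rw [hfd i] at h
        obtain ⟨z, hz, hze⟩ := Finset.mem_image.1 h
        exact ⟨z, hze.symm, hz⟩
      choose y hyw hyd using hleaf
      have hyinj : Function.Injective y := by
        intro i j hij
        apply hwinj
        rw [hyw i, hyw j, hij]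
      have hyx : ∀ i, y i ≠ x := by
        intro i h
        apply hwne i
        rw [hyw i, h]
      have hynotd : ∀ i j : Fin t, j ≠ i → y j ∉ d i := by
        intro i j hji hmem
        apply hnotin i j hji
        rw [hfd i, hyw j]
        exact Finset.mem_image_of_mem _ hmem
      have hdcard : ∀ i, (d i).card = r := fun i =>
        (Finset.mem_powersetCard.1 (Finset.mem_sdiff.1 (hdD i)).1).2
      set Y : Finset (Fin (r + t - 1)) := Finset.univ.image y with hY
      have hYcard : Y.card = t := by
        rw [hY, Finset.card_image_of_injective _ hyinj, Finset.card_univ, Fintype.card_fin]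
      set Q : Finset (Fin (r + t - 1)) := Finset.univ \ Y with hQ
      have hQcard : Q.card = r - 1 := by
        rw [hQ, Finset.card_sdiff_of_subset (Finset.subset_univ _), Finset.card_univ, Fintype.card_fin,
          hYcard]
        omega
      have hyiQ : ∀ i : Fin t, y i ∉ Q := by
        intro i
        have hmem : y i ∈ Y := hY ▸ Finset.mem_image_of_mem y (Finset.mem_univ i)
        simp [hQ, hmem]
      -- structure of the edges
      have hdeq : ∀ i, d i = insert (y i) Q := by
        intro i
        have hsub : d i ⊆ insert (y i) Q := by
          intro z hz
          rcases eq_or_ne z (y i) with h | h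
          · exact Finset.mem_insert.2 (Or.inl h)
          · refine Finset.mem_insert.2 (Or.inr ?_)
            rw [hQ]
            simp only [Finset.mem_sdiff, Finset.mem_univ, true_and]
            intro hzY
            obtain ⟨j, -, hj⟩ := Finset.mem_image.1 hzY
            exact hynotd i j (fun hji => h (by rw [← hj, hji])) (hj ▸ hz)
        have hcard : (insert (y i) Q).card ≤ (d i).card := by
          rw [Finset.card_insert_of_notMem (hyiQ i), hQcard, hdcard i]
          omega
        exact Finset.eq_of_subset_of_card_le hsub hcard
      -- the covering design gives a contradiction
      obtain ⟨e, heC, hQe⟩ := hcov Q hQcard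
      have hecard : e.card = r := hCu e heC
      have hne : (e \ Q).Nonempty := by
        rw [← Finset.card_pos, Finset.card_sdiff_of_subset hQe, hecard, hQcard]
        omega
      obtain ⟨z, hz⟩ := hne
      obtain ⟨hze, hzQ⟩ := Finset.mem_sdiff.1 hz
      have hzY : z ∈ Y := by
        by_contra h
        exact hzQ (by rw [hQ]; exact Finset.mem_sdiff.2 ⟨Finset.mem_univ z, h⟩)
      obtain ⟨i, -, hiz⟩ := Finset.mem_image.1 hzY
      have heeq : e = insert (y i) Q := by
        refine (Finset.eq_of_subset_of_card_le ?_ ?_).symm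
        · intro u hu
          rcases Finset.mem_insert.1 hu with h | h
          · rw [h, hiz]; exact hze
          · exact hQe h
        · rw [Finset.card_insert_of_notMem (hyiQ i), hQcard, hecard]
          omega
      have : d i ∈ C := by rw [hdeq i, ← heeq]; exact heC
      exact (Finset.mem_sdiff.1 (hdD i)).2 this
    · -- center lies in the leftover part
      have hstruct : ∀ i : Fin t, ∃ g : Finset (Fin b),
          g.card = r ∧ f i = g.image Sum.inr := by
        intro i
        rcases Finset.mem_union.1 (hfH i) with he | he
        · obtain ⟨j, -, hj⟩ := Finset.mem_biUnion.1 he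
          obtain ⟨dd, hd, hde⟩ := Finset.mem_image.1 hj
          have hx : (Sum.inr v : (Fin a × Fin (r + t - 1)) ⊕ Fin b)
              ∈ dd.image (fun x => Sum.inl (j, x)) := by rw [hde]; exact hw0f i
          obtain ⟨z, -, hz⟩ := Finset.mem_image.1 hx
          exact absurd hz (by simp)
        · obtain ⟨g, hg, hge⟩ := Finset.mem_image.1 he
          exact ⟨g, (Finset.mem_powersetCard.1 hg).2, hge.symm⟩
      choose g hgcard hfg using hstruct
      have hleaf : ∀ i : Fin t, ∃ z : Fin b, w i = Sum.inr z ∧ z ∈ g i := by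
        intro i
        have h := hwf i
        rw [hfg i] at h
        obtain ⟨z, hz, hze⟩ := Finset.mem_image.1 h
        exact ⟨z, hze.symm, hz⟩
      choose z hzw hzg using hleaf
      have hzinj : Function.Injective z := by
        intro i j hij
        apply hwinj
        rw [hzw i, hzw j, hij]
      have hznot : ∀ i j : Fin t, j ≠ i → z j ∉ g i := by
        intro i j hji hmem
        apply hnotin i j hji
        rw [hfg i, hzw j]
        exact Finset.mem_image_of_mem _ hmem
      let i0 : Fin t := ⟨0, hi0⟩
      set Z : Finset (Fin b) := Finset.univ.image z with hZ
      have hZcard : Z.card = t := by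
        rw [hZ, Finset.card_image_of_injective _ hzinj, Finset.card_univ, Fintype.card_fin]
      have hinter : g i0 ∩ Z ⊆ {z i0} := by
        intro u hu
        obtain ⟨hu1, hu2⟩ := Finset.mem_inter.1 hu
        obtain ⟨j, -, hj⟩ := Finset.mem_image.1 hu2
        rcases eq_or_ne j i0 with hji | hji
        · rw [Finset.mem_singleton, ← hj, hji]
        · exact absurd (hj ▸ hu1) (hznot i0 j hji)
      have hcard := Finset.card_union_add_card_inter (g i0) Z
      have h1 : (g i0 ∪ Z).card ≤ b := by
        calc (g i0 ∪ Z).card ≤ (Finset.univ : Finset (Fin b)).card := Finset.card_le_univ _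
        _ = b := by rw [Finset.card_univ, Fintype.card_fin]
      have h2 : (g i0 ∩ Z).card ≤ 1 := by
        calc (g i0 ∩ Z).card ≤ ({z i0} : Finset (Fin b)).card := Finset.card_le_card hinter
        _ = 1 := Finset.card_singleton _
      rw [hgcard, hZcard] at hcard
      omega
  · -- cardinality
    have hDcard : (r + t - 1).choose r - c ≤ D.card := by
      have h := Finset.le_card_sdiff C ((Finset.univ : Finset (Fin (r + t - 1))).powersetCard r)
      rwa [Finset.card_powersetCard, Finset.card_univ, Fintype.card_fin, hC] at h
    have hdisj : Disjoint HB HL := by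
      rw [Finset.disjoint_left]
      intro e heB heL
      obtain ⟨j, -, hj⟩ := Finset.mem_biUnion.1 heB
      obtain ⟨d, hd, hde⟩ := Finset.mem_image.1 hj
      have hdcard : d.card = r := (Finset.mem_powersetCard.1 (Finset.mem_sdiff.1 hd).1).2
      have hdne : d.Nonempty := by rw [← Finset.card_pos, hdcard]; omega
      obtain ⟨u, hu⟩ := hdne
      have huel : (Sum.inl (j, u) : (Fin a × Fin (r + t - 1)) ⊕ Fin b) ∈ e := by
        rw [← hde]; exact Finset.mem_image_of_mem _ hu
      obtain ⟨gg, -, hgg⟩ := Finset.mem_image.1 heL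
      rw [← hgg] at huel
      obtain ⟨w, -, hw⟩ := Finset.mem_image.1 huel
      exact absurd hw (by simp)
    rw [Finset.card_union_of_disjoint hdisj]
    have hHBcard : HB.card = a * D.card := by
      rw [hHB, Finset.card_biUnion]
      · rw [Finset.sum_congr rfl (fun j _ => Finset.card_image_of_injective D
          (Finset.image_injective (hblinj j)))]
        rw [Finset.sum_const, Finset.card_univ, Fintype.card_fin, smul_eq_mul]
      · intro j _ j' _ hjj
        simp only [Function.onFun]
        rw [Finset.disjoint_left]
        intro e hej hej'
        obtain ⟨d, hd, hde⟩ := Finset.mem_image.1 hej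
        obtain ⟨d', hd', hde'⟩ := Finset.mem_image.1 hej'
        have hdcard : d.card = r := (Finset.mem_powersetCard.1 (Finset.mem_sdiff.1 hd).1).2
        have hdne : d.Nonempty := by rw [← Finset.card_pos, hdcard]; omega
        obtain ⟨u, hu⟩ := hdne
        have huel : (Sum.inl (j, u) : (Fin a × Fin (r + t - 1)) ⊕ Fin b) ∈ e := by
          rw [← hde]; exact Finset.mem_image_of_mem _ hu
        rw [← hde'] at huel
        obtain ⟨u', -, hu'⟩ := Finset.mem_image.1 huel
        exact hjj (congrArg Prod.fst (Sum.inl.inj hu')).symm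
    have hHLcard : HL.card = b.choose r := by
      rw [hHL, Finset.card_image_of_injective _ (Finset.image_injective Sum.inr_injective),
        Finset.card_powersetCard, Finset.card_univ, Fintype.card_fin]
    rw [hHBcard, hHLcard]
    exact Nat.add_le_add_right (Nat.mul_le_mul_left a hDcard) _

theorem stmt_2 (r t a b c n : ℕ) (hr : 2 ≤ r) (ht : 2 ≤ t)
    (hn : n = a * (r + t - 1) + b) (hb : b ≤ r + t - 2)
    (hcov : ∃ C : Finset (Finset (Fin (r + t - 1))),
      C.card = c ∧ (∀ e ∈ C, e.card = r) ∧
      ∀ s : Finset (Fin (r + t - 1)), s.card = r - 1 → ∃ e ∈ C, s ⊆ e) :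
    ∃ H : Finset (Finset (Fin n)), IsUniform r H ∧ ¬ HasStarTrace t H ∧
      a * ((r + t - 1).choose r - c) + b.choose r ≤ H.card := by
  classical
  obtain ⟨C, hC, hCu, hcov⟩ := hcov
  obtain ⟨H0, hU, hS, hcard⟩ := main_construction r t a b c hr ht hb C hC hCu hcov
  -- the equivalence between the model vertex set and `Fin n`
  have e : (Fin a × Fin (r + t - 1)) ⊕ Fin b ≃ Fin n :=
    ((Equiv.sumCongr finProdFinEquiv (Equiv.refl (Fin b))).trans finSumFinEquiv).trans
      (finCongr hn.symm)
  refine ⟨H0.image (Finset.image e), ?_, ?_, ?_⟩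
  · intro s hs
    obtain ⟨g, hg, hge⟩ := Finset.mem_image.1 hs
    rw [← hge, Finset.card_image_of_injective _ e.injective]
    exact hU g hg
  · intro h
    exact hS (star_trace_of_image e t H0 h)
  · rw [Finset.card_image_of_injective _ (Finset.image_injective e.injective)]
    exact hcard
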